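/- Let G⁻ be a digraph on vertex set V, let E⁺ = {(u₁,v₁),...,(u_k,v_k)} be extra edges, let s ∈ V with v₀ := s, and let V_s be the set of vertices reachable from s in G⁻ ∪ E⁺. Suppose V_{s,0},...,V_{s,k} are constructed by the following procedure: V_{s,0} is the set of vertices reachable from s in G⁻; then, repeatedly, while some (u_i, v_i) ∈ E⁺ has u_i already covered and v_i not yet covered, set V_{s,i} to the vertices reachable from v_i in G⁻ that are not yet covered. Then the sets V_{s,0},...,V_{s,k} are pairwise disjoint, their union equals V_s, and for every i and every z ∈ V_{s,i}, every v_i → z path in G⁻ is fully contained in the induced subgraph G⁻[V_{s,i}]. -/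

import Mathlib

/-- `p` is a walk in `E` from `a` to `b` (as its full list of vertices). -/
def IsWalkList {V : Type*} (E : V → V → Prop) (p : List V) (a b : V) : Prop :=
  p.head? = some a ∧ p.getLast? = some b ∧ List.Chain' E p

/-- the partition procedure. `Em` is the decremental graph `G⁻`, the extra
edges are `(eu i, ev i)` for `i : Fin k`, and `E'` is `G⁻ ∪ E⁺`. `A0` is the set of
vertices reachable from `s` in `G⁻`; the procedure processes (in the order given by the
duplicate-free list `L`) edges whose tail is covered and whose head is not, assigning to
`A i` the not-yet-covered vertices reachable from `ev i` in `G⁻`, until no further edge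
applies. Then the sets `A0, A 0, ..., A (k-1)` are pairwise disjoint, their union is the
set of vertices reachable from `s` in `G⁻ ∪ E⁺`, and every `G⁻`-walk from `ev i` to a
vertex of `A i` (resp. from `s` to a vertex of `A0`) stays inside `A i` (resp. `A0`). -/
lemma walk_head_reach {V : Type*} {E : V → V → Prop} :
    ∀ (p : List V) (a w : V), List.Chain' E p → p.head? = some a → w ∈ p →
      Relation.ReflTransGen E a w
  | [], a, w, _, _, hw => by simp at hw
  | [x], a, w, _, hh, hw => by
      simp at hh hw; subst hh; subst hw; exact .refl
  | (x :: y :: rest), a, w, hch, hh, hw => by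
      simp only [List.head?_cons, Option.some.injEq] at hh
      subst hh
      replace hch : E x y ∧ List.Chain' E (y :: rest) := List.isChain_cons_cons.1 hch
      rcases List.mem_cons.1 hw with rfl | hw
      · exact .refl
      · exact .head hch.1 (walk_head_reach (y :: rest) y w hch.2 rfl hw)

lemma walk_last_reach {V : Type*} {E : V → V → Prop} :
    ∀ (p : List V) (b w : V), List.Chain' E p → p.getLast? = some b → w ∈ p →
      Relation.ReflTransGen E w b
  | [], b, w, _, _, hw => by simp at hw
  | [x], b, w, _, hh, hw => by
      simp at hh hw; subst hh; subst hw; exact .refl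
  | (x :: y :: rest), b, w, hch, hh, hw => by
      replace hch : E x y ∧ List.Chain' E (y :: rest) := List.isChain_cons_cons.1 hch
      rw [List.getLast?_cons_cons] at hh
      rcases List.mem_cons.1 hw with rfl | hw
      · exact .head hch.1 (walk_last_reach (y :: rest) b y hch.2 hh List.mem_cons_self)
      · exact walk_last_reach (y :: rest) b w hch.2 hh hw

theorem partition_procedure
    {V : Type*} (Em : V → V → Prop) (s : V) (k : ℕ)
    (eu ev : Fin k → V)
    (E' : V → V → Prop)
    (hE' : ∀ x y, E' x y ↔ (Em x y ∨ ∃ i : Fin k, eu i = x ∧ ev i = y))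
    (A0 : Set V) (A : Fin k → Set V)
    (L : List (Fin k)) (hnd : L.Nodup)
    (covered : ℕ → Set V)
    (hcov : ∀ t, covered t = A0 ∪ {z | ∃ i ∈ L.take t, z ∈ A i})
    (hA0 : A0 = {z | Relation.ReflTransGen Em s z})
    (hstep : ∀ (t : ℕ) (i : Fin k), L[t]? = some i →
      eu i ∈ covered t ∧ ev i ∉ covered t ∧
      A i = {z | Relation.ReflTransGen Em (ev i) z} \ covered t)
    (hskip : ∀ i : Fin k, i ∉ L → A i = ∅)
    (hdone : ∀ i : Fin k, eu i ∈ covered L.length → ev i ∈ covered L.length) :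
    ((∀ i, Disjoint A0 (A i)) ∧ (∀ i j, i ≠ j → Disjoint (A i) (A j))) ∧
    ((A0 ∪ ⋃ i, A i) = {z | Relation.ReflTransGen E' s z}) ∧
    ((∀ z ∈ A0, ∀ p : List V, IsWalkList Em p s z → ∀ w ∈ p, w ∈ A0) ∧
     (∀ i : Fin k, ∀ z ∈ A i, ∀ p : List V,
        IsWalkList Em p (ev i) z → ∀ w ∈ p, w ∈ A i)) := by
  classical
  have htakemono : ∀ {t t' : ℕ}, t ≤ t' → L.take t ⊆ L.take t' := by
    intro t t' h i hi
    have : L.take t = (L.take t').take t := by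
      rw [List.take_take, min_eq_left h]
    rw [this] at hi
    exact List.take_subset _ _ hi
  have hmono : ∀ {t t' : ℕ}, t ≤ t' → covered t ⊆ covered t' := by
    intro t t' h
    rw [hcov, hcov]
    apply Set.union_subset_union_right
    rintro z ⟨i, hi, hzi⟩
    exact ⟨i, htakemono h hi, hzi⟩
  have hmemtake : ∀ (t : ℕ) (i : Fin k), i ∈ L.take t → ∃ t', t' < t ∧ L[t']? = some i := by
    intro t i hi
    obtain ⟨n, hn⟩ := List.mem_iff_getElem?.1 hi
    rw [List.getElem?_take] at hn
    by_cases h : n < t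
    · rw [if_pos h] at hn; exact ⟨n, h, hn⟩
    · rw [if_neg h] at hn; exact absurd hn (by simp)
  have htakemem : ∀ (t : ℕ) (i : Fin k), L[t]? = some i → i ∈ L.take (t+1) := by
    intro t i h
    refine List.mem_iff_getElem?.2 ⟨t, ?_⟩
    rw [List.getElem?_take, if_pos (Nat.lt_succ_self t)]; exact h
  have hA0cov : ∀ t, A0 ⊆ covered t := by
    intro t; rw [hcov]; exact Set.subset_union_left
  have hAicov : ∀ (t : ℕ) (i : Fin k), L[t]? = some i → A i ⊆ covered (t+1) := by
    intro t i h z hz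
    rw [hcov]
    exact Or.inr ⟨i, htakemem t i h, hz⟩
  -- covered t is closed under Em-steps
  have hclosed : ∀ (t : ℕ), ∀ x ∈ covered t, ∀ y, Em x y → y ∈ covered t := by
    intro t x hx y hxy
    rw [hcov] at hx
    rcases hx with hx | ⟨i, hi, hxi⟩
    · apply hA0cov
      rw [hA0] at hx ⊢
      exact hx.tail hxy
    · obtain ⟨t', ht', hL⟩ := hmemtake t i hi
      obtain ⟨-, -, hAi⟩ := hstep t' i hL
      rw [hAi] at hxi
      have hy : Relation.ReflTransGen Em (ev i) y := hxi.1.tail hxy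
      by_cases hyc : y ∈ covered t'
      · exact hmono (le_of_lt ht') hyc
      · rw [hcov]
        exact Or.inr ⟨i, hi, by rw [hAi]; exact ⟨hy, hyc⟩⟩
  have hclosedR : ∀ (t : ℕ), ∀ x ∈ covered t, ∀ y,
      Relation.ReflTransGen Em x y → y ∈ covered t := by
    intro t x hx y hxy
    induction hxy with
    | refl => exact hx
    | tail _ h ih => exact hclosed t _ ih _ h
  have hEmE' : ∀ x y, Em x y → E' x y := fun x y h => (hE' x y).2 (Or.inl h)
  have hcovreach : ∀ t, covered t ⊆ {z | Relation.ReflTransGen E' s z} := by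
    intro t
    induction t with
    | zero =>
      rw [hcov]
      rintro z (hz | ⟨i, hi, -⟩)
      · rw [hA0] at hz
        exact Relation.ReflTransGen.mono hEmE' _ _ hz
      · simp at hi
    | succ t ih =>
      intro z hz
      rw [hcov] at hz
      rcases hz with hz | ⟨i, hi, hzi⟩
      · exact ih (hA0cov t hz)
      · obtain ⟨t', ht', hL⟩ := hmemtake (t+1) i hi
        by_cases hlt : t' < t
        · apply ih
          rw [hcov]
          exact Or.inr ⟨i, htakemono hlt (htakemem t' i hL), hzi⟩
        · have ht'' : t' = t := by omega
          subst ht''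
          obtain ⟨heu, -, hAi⟩ := hstep t' i hL
          have h1 : Relation.ReflTransGen E' s (eu i) := ih heu
          have h2 : Relation.ReflTransGen E' s (ev i) :=
            h1.tail ((hE' _ _).2 (Or.inr ⟨i, rfl, rfl⟩))
          rw [hAi] at hzi
          exact h2.trans (Relation.ReflTransGen.mono hEmE' _ _ hzi.1)
  have hsA0 : s ∈ A0 := by rw [hA0]; exact .refl
  -- covered L.length is the union
  have hUnion : A0 ∪ ⋃ i, A i = covered (L.length) := by
    apply Set.Subset.antisymm
    · apply Set.union_subset (hA0cov _)
      apply Set.iUnion_subset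
      intro i z hz
      by_cases hiL : i ∈ L
      · rw [hcov, List.take_length]
        exact Or.inr ⟨i, hiL, hz⟩
      · rw [hskip i hiL] at hz; exact absurd hz (Set.notMem_empty z)
    · rw [hcov, List.take_length]
      rintro z (hz | ⟨i, -, hzi⟩)
      · exact Or.inl hz
      · exact Or.inr (Set.mem_iUnion.2 ⟨i, hzi⟩)
  have hfull : covered (L.length) = {z | Relation.ReflTransGen E' s z} := by
    apply Set.Subset.antisymm (hcovreach _)
    intro z hz
    induction hz with
    | refl => exact hA0cov _ hsA0
    | tail _ h ih =>
      rcases (hE' _ _).1 h with h' | ⟨j, hju, hjv⟩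
      · exact hclosed _ _ ih _ h'
      · subst hju; subst hjv
        exact hdone j ih
  refine ⟨⟨?_, ?_⟩, ?_, ?_, ?_⟩
  · -- A0 disjoint from A i
    intro i
    by_cases hiL : i ∈ L
    · obtain ⟨t, -, hL⟩ := hmemtake L.length i (by rwa [List.take_length])
      obtain ⟨-, -, hAi⟩ := hstep t i hL
      rw [Set.disjoint_right, hAi]
      intro z hz
      exact fun hz0 => hz.2 (hA0cov t hz0)
    · rw [hskip i hiL]; exact disjoint_bot_right
  · -- A i disjoint from A j
    intro i j hij
    by_cases hiL : i ∈ L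
    · by_cases hjL : j ∈ L
      · obtain ⟨t, -, hLi⟩ := hmemtake L.length i (by rwa [List.take_length])
        obtain ⟨t', -, hLj⟩ := hmemtake L.length j (by rwa [List.take_length])
        have htt : t ≠ t' := by
          rintro rfl; rw [hLi] at hLj; exact hij (Option.some.inj hLj)
        rcases lt_or_gt_of_ne htt with h | h
        · obtain ⟨-, -, hAj⟩ := hstep t' j hLj
          rw [Set.disjoint_right, hAj]
          intro z hz hz0
          exact hz.2 (hmono h (hAicov t i hLi hz0))
        · obtain ⟨-, -, hAi⟩ := hstep t i hLi
          rw [Set.disjoint_left, hAi]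
          intro z hz hz0
          exact hz.2 (hmono h (hAicov t' j hLj hz0))
      · rw [hskip j hjL]; exact disjoint_bot_right
    · rw [hskip i hiL]; exact disjoint_bot_left
  · rw [hUnion]; exact hfull
  · -- walks from s stay in A0
    intro z hz p hp w hw
    rw [hA0]
    exact walk_head_reach p s w hp.2.2 hp.1 hw
  · -- walks from ev i stay in A i
    intro i z hz p hp w hw
    by_cases hiL : i ∈ L
    · obtain ⟨t, -, hL⟩ := hmemtake L.length i (by rwa [List.take_length])
      obtain ⟨-, -, hAi⟩ := hstep t i hL
      rw [hAi]
      rw [hAi] at hz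
      refine ⟨walk_head_reach p (ev i) w hp.2.2 hp.1 hw, fun hwc => ?_⟩
      exact hz.2 (hclosedR t w hwc z (walk_last_reach p z w hp.2.2 hp.2.1 hw))
    · rw [hskip i hiL] at hz; exact absurd hz (Set.notMem_empty z)
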